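/- Let m ≥ 2 be an even integer, let f : ℝ → ℝ be (m+2) times continuously differentiable, and let x ∈ ℝ. Suppose the real coefficients α, a, b satisfy 1 + 2α = a + b and, for every integer l with 1 ≤ l ≤ m/2 − 1, 2α/(2l)! = 2(4^l b + a)/(2l+2)!. Define for h ≠ 0 the truncation error E(h) = α(f''(x−h) + f''(x+h)) + f''(x) − b·(f(x+2h) − 2f(x) + f(x−2h))/(4h²) − a·(f(x+h) − 2f(x) + f(x−h))/h². Then E(h) = O(h^m) as h → 0; i.e. the compact second-derivative scheme has order m. -/

import Mathlib

open Set Finset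

open Finset in
lemma cfd_pairsum (N : ℕ) (g : ℕ → ℝ) :
    ∑ k ∈ Finset.range (2*N), g k = ∑ i ∈ Finset.range N, (g (2*i) + g (2*i+1)) := by
  induction N with
  | zero => simp
  | succ n ih =>
      rw [Finset.sum_range_succ, ← ih, show 2*(n+1) = (2*n+1)+1 by ring,
        Finset.sum_range_succ, Finset.sum_range_succ]
      ring_nf

lemma cfd_idw (n k : ℕ) (g : ℝ → ℝ) (hg : ContDiff ℝ (n : ℕ) g) (hk : k ≤ n)
    {s : Set ℝ} (hs : UniqueDiffOn ℝ s) {y : ℝ} (hy : y ∈ s) :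
    iteratedDerivWithin k g s y = iteratedDeriv k g y := by
  have h1 : HasFTaylorSeriesUpTo (n : ℕ∞) g (ftaylorSeries ℝ g) :=
    contDiff_iff_ftaylorSeries.mp hg
  have h2 := (h1.hasFTaylorSeriesUpToOn s).eq_iteratedFDerivWithin_of_uniqueDiffOn
    (by exact_mod_cast hk) hs hy
  rw [iteratedDerivWithin_eq_iteratedFDerivWithin, iteratedDeriv_eq_iteratedFDeriv, ← h2]
  rfl

lemma cfd_iter (f : ℝ → ℝ) (k : ℕ) :
    iteratedDeriv k (iteratedDeriv 2 f) = iteratedDeriv (k+2) f := by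
  induction k with
  | zero => simp
  | succ n ih => rw [iteratedDeriv_succ, ih, ← iteratedDeriv_succ]

lemma cfd_taylor_bound (N : ℕ) (g : ℝ → ℝ) (hg : ContDiff ℝ ((N+1 : ℕ) : ℕ) g) (x : ℝ) :
    ∃ C : ℝ, 0 ≤ C ∧ ∀ h : ℝ, |h| ≤ 1 →
      |g (x + h) - ∑ k ∈ Finset.range (N+1),
        iteratedDeriv k g x * h^k / (Nat.factorial k : ℝ)| ≤ C * |h|^(N+1) := by
  obtain ⟨M, hM⟩ := (isCompact_Icc (a := x - 1) (b := x + 1)).exists_bound_of_continuousOn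
    (hg.continuous_iteratedDeriv (N+1) (by exact_mod_cast le_rfl)).continuousOn
  have hM' : ∀ y ∈ Icc (x-1) (x+1), |iteratedDeriv (N+1) g y| ≤ M := by
    intro y hy; simpa [Real.norm_eq_abs] using hM y hy
  have hM0 : 0 ≤ M := le_trans (abs_nonneg _) (hM' x ⟨by linarith, by linarith⟩)
  have onesided : ∀ (φ : ℝ → ℝ), ContDiff ℝ ((N+1 : ℕ) : ℕ) φ →
      (∀ y ∈ Icc x (x+1), |iteratedDeriv (N+1) φ y| ≤ M) →
      ∀ h : ℝ, 0 ≤ h → h ≤ 1 →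
      |φ (x + h) - ∑ k ∈ Finset.range (N+1),
        iteratedDeriv k φ x * h^k / (Nat.factorial k : ℝ)| ≤ M / (Nat.factorial N : ℝ) * h^(N+1) := by
    intro φ hφ hMφ h h0 h1
    have hxx : x ≤ x + 1 := by linarith
    have hud : UniqueDiffOn ℝ (Icc x (x+1)) := uniqueDiffOn_Icc (by linarith)
    have hmem : x + h ∈ Icc x (x+1) := ⟨by linarith, by linarith⟩
    have hidw : ∀ k ≤ N+1, ∀ y ∈ Icc x (x+1),
        iteratedDerivWithin k φ (Icc x (x+1)) y = iteratedDeriv k φ y := by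
      intro k hk y hy; exact cfd_idw (N+1) k φ hφ hk hud hy
    have hbd := taylor_mean_remainder_bound hxx (hφ.contDiffOn (s := Icc x (x+1))) hmem
      (fun y hy => by rw [Real.norm_eq_abs, hidw (N+1) le_rfl y hy]; exact hMφ y hy)
    have tw : taylorWithinEval φ N (Icc x (x+1)) x (x + h) =
        ∑ k ∈ Finset.range (N+1), iteratedDeriv k φ x * h^k / (Nat.factorial k : ℝ) := by
      rw [taylor_within_apply]
      refine Finset.sum_congr rfl fun k hk => ?_
      rw [hidw k (le_of_lt (Finset.mem_range.mp hk)) x ⟨le_rfl, by linarith⟩,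
        show x + h - x = h by ring, smul_eq_mul]
      ring
    rw [tw, Real.norm_eq_abs, show x + h - x = h by ring] at hbd
    calc _ ≤ M * h ^ (N+1) / (Nat.factorial N : ℝ) := hbd
      _ = M / (Nat.factorial N : ℝ) * h^(N+1) := by ring
  refine ⟨M / (Nat.factorial N : ℝ), by positivity, fun h hh => ?_⟩
  rcases le_or_gt 0 h with h0 | h0
  · have := onesided g hg (fun y hy => hM' y ⟨by linarith [hy.1], hy.2⟩) h h0
      (by rwa [abs_of_nonneg h0] at hh)
    rwa [abs_of_nonneg h0]
  · -- reflect
    set φ : ℝ → ℝ := fun t => g (-(t + (-(2*x)))) with hφdef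
    have hφc : ContDiff ℝ ((N+1:ℕ) : ℕ) φ :=
      hg.comp (by fun_prop)
    have hφd : ∀ k y, iteratedDeriv k φ y = (-1:ℝ)^k * iteratedDeriv k g (2*x - y) := by
      intro k y
      have e1 : iteratedDeriv k φ y
          = iteratedDeriv k (fun u => g (-u)) (y + (-(2*x))) := by
        have := iteratedDeriv_comp_add_const k (fun u => g (-u)) (-(2*x))
        exact congrFun this y
      rw [e1, iteratedDeriv_comp_neg, smul_eq_mul]
      ring_nf
    have hMneg : ∀ y ∈ Icc x (x+1), |iteratedDeriv (N+1) φ y| ≤ M := by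
      intro y hy
      rw [hφd, abs_mul, abs_pow, abs_neg, abs_one, one_pow, one_mul]
      exact hM' (2*x - y) ⟨by linarith [hy.2], by linarith [hy.1]⟩
    have h1 : -h ≤ 1 := by rwa [abs_of_neg h0] at hh
    have := onesided φ hφc hMneg (-h) (by linarith) h1
    have eφ : φ (x + -h) = g (x + h) := by simp [hφdef]; ring_nf
    have esum : ∑ k ∈ Finset.range (N+1), iteratedDeriv k φ x * (-h)^k / (Nat.factorial k : ℝ)
        = ∑ k ∈ Finset.range (N+1), iteratedDeriv k g x * h^k / (Nat.factorial k : ℝ) := by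
      refine Finset.sum_congr rfl fun k hk => ?_
      rw [hφd, show 2*x - x = x by ring, neg_pow h k]
      ring_nf
      rw [mul_comm k 2, pow_mul]
      norm_num
    rw [eφ, esum] at this
    rwa [abs_of_neg h0]

lemma cfd_key (p : ℕ) (α a b : ℝ) (D : ℕ → ℝ)
    (hc0 : 1 + 2*α = a + b)
    (hc : ∀ i : ℕ, i < p → 2*α/((Nat.factorial (2*i+2)) : ℝ)
        = 2*((4:ℝ)^(i+1)*b+a)/((Nat.factorial (2*i+4)) : ℝ))
    (h : ℝ) (hh : h ≠ 0) :
    α * ((∑ k ∈ Finset.range (2*p+2), D (k+2)*(-h)^k/(Nat.factorial k : ℝ))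
        + ∑ k ∈ Finset.range (2*p+2), D (k+2)*h^k/(Nat.factorial k : ℝ)) + D 2
      - b * ((∑ k ∈ Finset.range (2*p+4), D k*(2*h)^k/(Nat.factorial k : ℝ)) - 2*D 0
        + ∑ k ∈ Finset.range (2*p+4), D k*(-(2*h))^k/(Nat.factorial k : ℝ))/(4*h^2)
      - a * ((∑ k ∈ Finset.range (2*p+4), D k*h^k/(Nat.factorial k : ℝ)) - 2*D 0
        + ∑ k ∈ Finset.range (2*p+4), D k*(-h)^k/(Nat.factorial k : ℝ))/h^2 = 0 := by
  have fact_ne : ∀ k : ℕ, ((Nat.factorial k : ℝ)) ≠ 0 :=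
    fun k => Nat.cast_ne_zero.2 (Nat.factorial_ne_zero k)
  -- symmetrized big sums
  have symA : ∀ t : ℝ,
      (∑ k ∈ Finset.range (2*p+4), D k*t^k/(Nat.factorial k : ℝ)) - 2*D 0
        + ∑ k ∈ Finset.range (2*p+4), D k*(-t)^k/(Nat.factorial k : ℝ)
      = (∑ i ∈ Finset.range (p+2), 2*(D (2*i)*t^(2*i)/((Nat.factorial (2*i)) : ℝ))) - 2*D 0 := by
    intro t
    have e : (∑ k ∈ Finset.range (2*p+4), D k*t^k/(Nat.factorial k : ℝ))
        + ∑ k ∈ Finset.range (2*p+4), D k*(-t)^k/(Nat.factorial k : ℝ)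
        = ∑ i ∈ Finset.range (p+2), 2*(D (2*i)*t^(2*i)/((Nat.factorial (2*i)) : ℝ)) := by
      rw [← Finset.sum_add_distrib, show 2*p+4 = 2*(p+2) by ring,
        cfd_pairsum (p+2) (fun k => D k*t^k/(Nat.factorial k : ℝ) + D k*(-t)^k/(Nat.factorial k : ℝ))]
      refine Finset.sum_congr rfl fun i _ => ?_
      rw [Even.neg_pow (even_two_mul i), Odd.neg_pow ⟨i, by ring⟩]
      ring
    linarith [e]
  -- peel two terms off the symmetrized sum
  have peelA : ∀ t : ℝ,
      (∑ i ∈ Finset.range (p+2), 2*(D (2*i)*t^(2*i)/((Nat.factorial (2*i)) : ℝ))) - 2*D 0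
      = (∑ i ∈ Finset.range p, 2*(D (2*i+4)*t^(2*i+4)/((Nat.factorial (2*i+4)) : ℝ)))
        + D 2 * t^2 := by
    intro t
    rw [Finset.sum_range_succ' (fun i => 2*(D (2*i)*t^(2*i)/((Nat.factorial (2*i)) : ℝ))) (p+1),
      Finset.sum_range_succ' (fun i => 2*(D (2*(i+1))*t^(2*(i+1))/((Nat.factorial (2*(i+1))) : ℝ))) p]
    have e0 : 2*(D (2*0)*t^(2*0)/((Nat.factorial (2*0)) : ℝ)) = 2*D 0 := by norm_num
    have e1 : 2*(D (2*(0+1))*t^(2*(0+1))/((Nat.factorial (2*(0+1))) : ℝ)) = D 2 * t^2 := by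
      norm_num [Nat.factorial]; ring
    rw [e0, e1]
    have e2 : ∑ i ∈ Finset.range p,
        2*(D (2*(i+1+1))*t^(2*(i+1+1))/((Nat.factorial (2*(i+1+1))) : ℝ))
        = ∑ i ∈ Finset.range p, 2*(D (2*i+4)*t^(2*i+4)/((Nat.factorial (2*i+4)) : ℝ)) := by
      refine Finset.sum_congr rfl fun i _ => ?_
      rw [show 2*(i+1+1) = 2*i+4 by ring]
    rw [e2]; ring
  -- the α-side sum
  have symL :
      (∑ k ∈ Finset.range (2*p+2), D (k+2)*(-h)^k/(Nat.factorial k : ℝ))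
        + ∑ k ∈ Finset.range (2*p+2), D (k+2)*h^k/(Nat.factorial k : ℝ)
      = (∑ i ∈ Finset.range p, 2*(D (2*i+4)*h^(2*i+2)/((Nat.factorial (2*i+2)) : ℝ)))
        + 2*D 2 := by
    rw [← Finset.sum_add_distrib, show 2*p+2 = 2*(p+1) by ring,
      cfd_pairsum (p+1) (fun k => D (k+2)*(-h)^k/(Nat.factorial k : ℝ) + D (k+2)*h^k/(Nat.factorial k : ℝ))]
    have e : ∀ i ∈ Finset.range (p+1),
        (D (2*i+2)*(-h)^(2*i)/(Nat.factorial (2*i) : ℝ) + D (2*i+2)*h^(2*i)/(Nat.factorial (2*i) : ℝ))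
          + (D (2*i+1+2)*(-h)^(2*i+1)/(Nat.factorial (2*i+1) : ℝ)
            + D (2*i+1+2)*h^(2*i+1)/(Nat.factorial (2*i+1) : ℝ))
        = 2*(D (2*i+2)*h^(2*i)/((Nat.factorial (2*i)) : ℝ)) := by
      intro i _
      rw [Even.neg_pow (even_two_mul i), Odd.neg_pow ⟨i, by ring⟩]
      ring
    rw [Finset.sum_congr rfl e,
      Finset.sum_range_succ' (fun i => 2*(D (2*i+2)*h^(2*i)/((Nat.factorial (2*i)) : ℝ))) p]
    have e0 : 2*(D (2*0+2)*h^(2*0)/((Nat.factorial (2*0)) : ℝ)) = 2*D 2 := by norm_num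
    have e2 : ∑ i ∈ Finset.range p, 2*(D (2*(i+1)+2)*h^(2*(i+1))/((Nat.factorial (2*(i+1))) : ℝ))
        = ∑ i ∈ Finset.range p, 2*(D (2*i+4)*h^(2*i+2)/((Nat.factorial (2*i+2)) : ℝ)) := by
      refine Finset.sum_congr rfl fun i _ => ?_
      rw [show 2*(i+1)+2 = 2*i+4 by ring, show 2*(i+1) = 2*i+2 by ring]
    rw [e0, e2]
  rw [symA (2*h), symA h, peelA (2*h), peelA h, symL]
  -- now the per-term identity
  have sums_eq :
      ∑ i ∈ Finset.range p, (α*(4*h^2)) * (2*(D (2*i+4)*h^(2*i+2)/((Nat.factorial (2*i+2)) : ℝ)))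
      = ∑ i ∈ Finset.range p,
          (b * (2*(D (2*i+4)*(2*h)^(2*i+4)/((Nat.factorial (2*i+4)) : ℝ)))
            + (4*a) * (2*(D (2*i+4)*h^(2*i+4)/((Nat.factorial (2*i+4)) : ℝ)))) := by
    refine Finset.sum_congr rfl fun i hi => ?_
    have hci := hc i (Finset.mem_range.mp hi)
    rw [div_eq_div_iff (fact_ne _) (fact_ne _)] at hci
    have h2h : (2*h)^(2*i+4) = 16*(4:ℝ)^i*h^(2*i+4) := by
      rw [mul_pow, show (2:ℝ)^(2*i+4) = 16*(4:ℝ)^i by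
        rw [pow_add, pow_mul]; norm_num; ring]
    rw [h2h]
    field_simp
    linear_combination (2 * D (2*i+4) * h^(2*i+4)) * hci
  have dL := Finset.mul_sum (Finset.range p)
    (fun i => 2*(D (2*i+4)*h^(2*i+2)/((Nat.factorial (2*i+2)) : ℝ))) (α*(4*h^2))
  have dB := Finset.mul_sum (Finset.range p)
    (fun i => 2*(D (2*i+4)*(2*h)^(2*i+4)/((Nat.factorial (2*i+4)) : ℝ))) b
  have dA := Finset.mul_sum (Finset.range p)
    (fun i => 2*(D (2*i+4)*h^(2*i+4)/((Nat.factorial (2*i+4)) : ℝ))) (4*a)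
  have dS := Finset.sum_add_distrib (s := Finset.range p)
    (f := fun i => b * (2*(D (2*i+4)*(2*h)^(2*i+4)/((Nat.factorial (2*i+4)) : ℝ))))
    (g := fun i => (4*a) * (2*(D (2*i+4)*h^(2*i+4)/((Nat.factorial (2*i+4)) : ℝ))))
  set SL := ∑ i ∈ Finset.range p, 2*(D (2*i+4)*h^(2*i+2)/((Nat.factorial (2*i+2)) : ℝ)) with hSL
  set SB := ∑ i ∈ Finset.range p, 2*(D (2*i+4)*(2*h)^(2*i+4)/((Nat.factorial (2*i+4)) : ℝ)) with hSB
  set SA := ∑ i ∈ Finset.range p, 2*(D (2*i+4)*h^(2*i+4)/((Nat.factorial (2*i+4)) : ℝ)) with hSA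
  have main :
      (α * (SL + 2*D 2) + D 2) * (4*h^2)
      = b * (SB + D 2*(2*h)^2) + 4*(a * (SA + D 2*h^2)) := by
    calc (α * (SL + 2*D 2) + D 2) * (4*h^2)
        = (α*(4*h^2)) * SL + (4*h^2)*(2*α+1)*D 2 := by ring
      _ = (∑ i ∈ Finset.range p,
            (α*(4*h^2)) * (2*(D (2*i+4)*h^(2*i+2)/((Nat.factorial (2*i+2)) : ℝ))))
            + (4*h^2)*(2*α+1)*D 2 := by rw [dL]
      _ = (∑ i ∈ Finset.range p,
            (b * (2*(D (2*i+4)*(2*h)^(2*i+4)/((Nat.factorial (2*i+4)) : ℝ)))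
              + (4*a) * (2*(D (2*i+4)*h^(2*i+4)/((Nat.factorial (2*i+4)) : ℝ)))))
            + (4*h^2)*(2*α+1)*D 2 := by rw [sums_eq]
      _ = ((∑ i ∈ Finset.range p,
            b * (2*(D (2*i+4)*(2*h)^(2*i+4)/((Nat.factorial (2*i+4)) : ℝ))))
            + ∑ i ∈ Finset.range p,
            (4*a) * (2*(D (2*i+4)*h^(2*i+4)/((Nat.factorial (2*i+4)) : ℝ))))
            + (4*h^2)*(2*α+1)*D 2 := by rw [dS]
      _ = (b * SB + (4*a) * SA) + (4*h^2)*(2*α+1)*D 2 := by rw [dB, dA]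
      _ = b * (SB + D 2*(2*h)^2) + 4*(a * (SA + D 2*h^2)) := by
          linear_combination (4*h^2*D 2) * hc0
  have h4 : (4:ℝ)*h^2 ≠ 0 := by positivity
  have expand : ∀ X Y Z : ℝ, X - b*Y/(4*h^2) - a*Z/h^2
      = (X*(4*h^2) - (b*Y + 4*(a*Z)))/(4*h^2) := by
    intro X Y Z; field_simp; ring
  rw [expand, div_eq_zero_iff]
  left
  linear_combination main



/-- If the coefficients `α, a, b` satisfy `1 + 2α = a + b` and
`2α/(2l)! = 2(4ˡ b + a)/(2l+2)!` for `l = 1, …, m/2 − 1` (with `m ≥ 2`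
even), then the compact second-derivative scheme has order `m`: for
`f ∈ C^{m+2}` the truncation error `E(h)` satisfies `|E(h)| ≤ C |h|^m`
for all small `h ≠ 0`. -/
theorem compact_second_derivative_order_m
    (m : ℕ) (hm : 2 ≤ m) (hmeven : Even m)
    (f : ℝ → ℝ) (hf : ContDiff ℝ (m + 2 : ℕ) f) (x : ℝ)
    (α a b : ℝ) (hcond0 : 1 + 2 * α = a + b)
    (hcond : ∀ l : ℕ, 1 ≤ l → l ≤ m / 2 - 1 →
      2 * α / (Nat.factorial (2 * l) : ℝ) =
        2 * ((4 : ℝ) ^ l * b + a) / (Nat.factorial (2 * l + 2) : ℝ))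
    (E : ℝ → ℝ)
    (hE : ∀ h : ℝ, h ≠ 0 → E h =
      α * (iteratedDeriv 2 f (x - h) + iteratedDeriv 2 f (x + h))
        + iteratedDeriv 2 f x
        - b * (f (x + 2 * h) - 2 * f x + f (x - 2 * h)) / (4 * h ^ 2)
        - a * (f (x + h) - 2 * f x + f (x - h)) / h ^ 2) :
    ∃ C > 0, ∃ h₀ > 0, ∀ h : ℝ, h ≠ 0 → |h| ≤ h₀ → |E h| ≤ C * |h| ^ m := by

  obtain ⟨n, rfl⟩ := hmeven
  obtain ⟨p, rfl⟩ : ∃ q, n = q + 1 := ⟨n - 1, by omega⟩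
  clear hm
  -- derived coefficient conditions
  have hc' : ∀ i : ℕ, i < p → 2*α/((Nat.factorial (2*i+2)) : ℝ)
      = 2*((4:ℝ)^(i+1)*b+a)/((Nat.factorial (2*i+4)) : ℝ) := by
    intro i hi
    have hci := hcond (i+1) (by omega) (by omega)
    rw [show 2*(i+1) = 2*i+2 by ring] at hci
    rw [show 2*i+2+2 = 2*i+4 by omega] at hci
    exact hci
  -- smoothness
  have hf' : ContDiff ℝ ((2*p+3+1 : ℕ) : ℕ) f := by
    rw [show 2*p+3+1 = (p+1)+(p+1)+2 by ring]; exact hf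
  have hgc : ContDiff ℝ ((2*p+1+1 : ℕ) : ℕ) (iteratedDeriv 2 f) := by
    rw [iteratedDeriv_eq_iterate]
    refine ContDiff.iterate_deriv' (2*p+1+1) 2 ?_
    rw [show 2*p+1+1+2 = (p+1)+(p+1)+2 by ring]; exact hf
  obtain ⟨C₁, hC₁0, hC₁⟩ := cfd_taylor_bound (2*p+1) (iteratedDeriv 2 f) hgc x
  obtain ⟨C₂, hC₂0, hC₂⟩ := cfd_taylor_bound (2*p+3) f hf' x
  have hC₁' : ∀ t : ℝ, |t| ≤ 1 →
      |iteratedDeriv 2 f (x + t) - ∑ k ∈ Finset.range (2*p+2),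
        iteratedDeriv (k+2) f x * t^k / (Nat.factorial k : ℝ)| ≤ C₁ * |t|^(2*p+2) := by
    intro t ht
    have h0 := hC₁ t ht
    rw [show 2*p+1+1 = 2*p+2 by omega] at h0
    have hsum_eq : (∑ k ∈ Finset.range (2*p+2),
        iteratedDeriv k (iteratedDeriv 2 f) x * t^k / (Nat.factorial k : ℝ))
        = ∑ k ∈ Finset.range (2*p+2),
          iteratedDeriv (k+2) f x * t^k / (Nat.factorial k : ℝ) :=
      Finset.sum_congr rfl fun k _ => by rw [cfd_iter f k]
    rwa [hsum_eq] at h0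
  have hC₂' : ∀ t : ℝ, |t| ≤ 1 →
      |f (x + t) - ∑ k ∈ Finset.range (2*p+4),
        iteratedDeriv k f x * t^k / (Nat.factorial k : ℝ)| ≤ C₂ * |t|^(2*p+4) := by
    intro t ht
    have h0 := hC₂ t ht
    rwa [show 2*p+3+1 = 2*p+4 by omega] at h0
  refine ⟨2*(abs α)*C₁ + 2^(2*p+3)*(abs b)*C₂ + 2*(abs a)*C₂ + 1, ?_, 1/2, by norm_num, ?_⟩
  · have h1 : 0 ≤ 2*|α| *C₁ := mul_nonneg (by positivity) hC₁0
    have h2 : 0 ≤ (2:ℝ)^(2*p+3)*|b| *C₂ := mul_nonneg (by positivity) hC₂0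
    have h3 : 0 ≤ 2*|a| *C₂ := mul_nonneg (by positivity) hC₂0
    linarith
  intro h hh hh2
  have hh1 : |h| ≤ 1 := by linarith
  have h2pos : (0:ℝ) < h^2 := by positivity
  have hkey := cfd_key p α a b (fun k => iteratedDeriv k f x) hcond0 hc' h hh
  beta_reduce at hkey
  simp only [iteratedDeriv_zero] at hkey
  have hEe := hE h hh
  rw [show x - h = x + -h by ring, show x - 2*h = x + -(2*h) by ring] at hEe
  have decomp : E h =
      α * ((iteratedDeriv 2 f (x + -h) - ∑ k ∈ Finset.range (2*p+2),
              iteratedDeriv (k+2) f x * (-h)^k/(Nat.factorial k : ℝ))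
          + (iteratedDeriv 2 f (x + h) - ∑ k ∈ Finset.range (2*p+2),
              iteratedDeriv (k+2) f x * h^k/(Nat.factorial k : ℝ)))
        - b * ((f (x + 2*h) - ∑ k ∈ Finset.range (2*p+4),
              iteratedDeriv k f x * (2*h)^k/(Nat.factorial k : ℝ))
          + (f (x + -(2*h)) - ∑ k ∈ Finset.range (2*p+4),
              iteratedDeriv k f x * (-(2*h))^k/(Nat.factorial k : ℝ)))/(4*h^2)
        - a * ((f (x + h) - ∑ k ∈ Finset.range (2*p+4),
              iteratedDeriv k f x * h^k/(Nat.factorial k : ℝ))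
          + (f (x + -h) - ∑ k ∈ Finset.range (2*p+4),
              iteratedDeriv k f x * (-h)^k/(Nat.factorial k : ℝ)))/h^2 := by
    rw [hEe]
    linear_combination hkey
  -- remainder bounds
  have hb1 := hC₁' (-h) (by rwa [abs_neg])
  rw [abs_neg] at hb1
  have hb2 := hC₁' h hh1
  have hb3 := hC₂' (2*h) (by rw [abs_mul, abs_two]; linarith)
  rw [abs_mul, abs_two] at hb3
  have hb4 := hC₂' (-(2*h)) (by rw [abs_neg, abs_mul, abs_two]; linarith)
  rw [abs_neg, abs_mul, abs_two] at hb4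
  have hb5 := hC₂' h hh1
  have hb6 := hC₂' (-h) (by rwa [abs_neg])
  rw [abs_neg] at hb6
  have hpow : |h|^(2*p+4) = |h|^(2*p+2)*h^2 := by
    rw [show 2*p+4 = (2*p+2)+2 by omega, pow_add, sq_abs]
  have hpow2 : ((2:ℝ)*|h|)^(2*p+4) = 4*(2:ℝ)^(2*p+2)*|h|^(2*p+4) := by
    rw [mul_pow, show 2*p+4 = (2*p+2)+2 by omega, pow_add]
    ring
  have ht0 : (0:ℝ) ≤ |h|^(2*p+2) := by positivity
  rw [show (p+1)+(p+1) = 2*p+2 by ring, decomp]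
  have tri : ∀ X Y Z : ℝ, |X - Y - Z| ≤ |X| + |Y| + |Z| := by
    intro X Y Z
    rw [sub_eq_add_neg, sub_eq_add_neg]
    calc |X + -Y + -Z| ≤ |X| + |-Y| + |-Z| := abs_add_three _ _ _
      _ = |X| + |Y| + |Z| := by rw [abs_neg, abs_neg]
  refine (tri _ _ _).trans ?_
  have e1 : |α * ((iteratedDeriv 2 f (x + -h) - ∑ k ∈ Finset.range (2*p+2),
        iteratedDeriv (k+2) f x * (-h)^k/(Nat.factorial k : ℝ))
      + (iteratedDeriv 2 f (x + h) - ∑ k ∈ Finset.range (2*p+2),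
        iteratedDeriv (k+2) f x * h^k/(Nat.factorial k : ℝ)))|
      ≤ |α| * (2*C₁*|h|^(2*p+2)) := by
    rw [abs_mul]
    exact mul_le_mul_of_nonneg_left ((abs_add_le _ _).trans (by linarith)) (abs_nonneg α)
  have e2 : |b * ((f (x + 2*h) - ∑ k ∈ Finset.range (2*p+4),
        iteratedDeriv k f x * (2*h)^k/(Nat.factorial k : ℝ))
      + (f (x + -(2*h)) - ∑ k ∈ Finset.range (2*p+4),
        iteratedDeriv k f x * (-(2*h))^k/(Nat.factorial k : ℝ)))/(4*h^2)|
      ≤ 2^(2*p+3)*|b| *C₂*|h|^(2*p+2) := by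
    rw [abs_div, abs_mul, abs_of_pos (show (0:ℝ) < 4*h^2 by positivity)]
    have hnum : |(f (x + 2*h) - ∑ k ∈ Finset.range (2*p+4),
        iteratedDeriv k f x * (2*h)^k/(Nat.factorial k : ℝ))
      + (f (x + -(2*h)) - ∑ k ∈ Finset.range (2*p+4),
        iteratedDeriv k f x * (-(2*h))^k/(Nat.factorial k : ℝ))|
        ≤ 2*(C₂*(2*|h|)^(2*p+4)) := (abs_add_le _ _).trans (by linarith)
    calc |b| * |_| / (4*h^2) ≤ |b| * (2*(C₂*(2*|h|)^(2*p+4))) / (4*h^2) := by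
          gcongr
      _ = 2^(2*p+3)*|b| *C₂*|h|^(2*p+2) := by
          rw [hpow2, hpow]
          field_simp
          ring
  have e3 : |a * ((f (x + h) - ∑ k ∈ Finset.range (2*p+4),
        iteratedDeriv k f x * h^k/(Nat.factorial k : ℝ))
      + (f (x + -h) - ∑ k ∈ Finset.range (2*p+4),
        iteratedDeriv k f x * (-h)^k/(Nat.factorial k : ℝ)))/h^2|
      ≤ 2*|a| *C₂*|h|^(2*p+2) := by
    rw [abs_div, abs_mul, abs_of_pos h2pos]
    have hnum : |(f (x + h) - ∑ k ∈ Finset.range (2*p+4),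
        iteratedDeriv k f x * h^k/(Nat.factorial k : ℝ))
      + (f (x + -h) - ∑ k ∈ Finset.range (2*p+4),
        iteratedDeriv k f x * (-h)^k/(Nat.factorial k : ℝ))|
        ≤ 2*(C₂*|h|^(2*p+4)) := (abs_add_le _ _).trans (by linarith)
    calc |a| * |_| / h^2 ≤ |a| * (2*(C₂*|h|^(2*p+4))) / h^2 := by gcongr
      _ = 2*|a| *C₂*|h|^(2*p+2) := by
          rw [hpow]
          field_simp
  calc _ ≤ |α| * (2*C₁*|h|^(2*p+2)) + 2^(2*p+3)*|b| *C₂*|h|^(2*p+2)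
        + 2*|a| *C₂*|h|^(2*p+2) := by linarith
    _ = (2*|α| *C₁ + 2^(2*p+3)*|b| *C₂ + 2*|a| *C₂) * |h|^(2*p+2) := by ring
    _ ≤ (2*|α| *C₁ + 2^(2*p+3)*|b| *C₂ + 2*|a| *C₂ + 1) * |h|^(2*p+2) := by
        apply mul_le_mul_of_nonneg_right (by linarith) ht0
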